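/- Second kernel moment asymptotic (constant A₃): as h → 0⁺, the D×D-matrix-valued integral h^{-(d+2)} ∫_{B̄(0,r)} K((φ(z) − x)/h) (φ(z) − x)(φ(z) − x)^T f(z) dz converges entrywise to f(0) · ∫_{ℝ^d} K(L u) (L u)(L u)^T du. -/

import Mathlib

set_option maxHeartbeats 1000000

open MeasureTheory Metric Filter

lemma abs_apply_le_norm {n : ℕ} (v : EuclideanSpace ℝ (Fin n)) (a : Fin n) :
    |v a| ≤ ‖v‖ := by
  rw [EuclideanSpace.norm_eq]
  have h1 : |v a| = Real.sqrt (‖v a‖ ^ 2) := by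
    rw [Real.sqrt_sq_eq_abs, abs_norm, Real.norm_eq_abs]
  rw [h1]
  apply Real.sqrt_le_sqrt
  exact Finset.single_le_sum (f := fun i => ‖v i‖ ^ 2)
    (fun i _ => by positivity) (Finset.mem_univ a)

/-- Second kernel moment asymptotic (constant A₃): as `h → 0⁺`, entrywise,
`h^(-(d+2)) ∫_{B̄(0,r)} K((φ z − x)/h) (φ z − x)(φ z − x)ᵀ f z dz
  → f 0 · ∫_{ℝ^d} K (L u) (L u)(L u)ᵀ du`. -/
theorem kernel_second_moment_A3
    (d D : ℕ) (hd : 0 < d) (hdD : d ≤ D) (r : ℝ) (hr : 0 < r)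
    (φ : EuclideanSpace ℝ (Fin d) → EuclideanSpace ℝ (Fin D))
    (hφ : ContDiff ℝ 1 φ)
    (c C : ℝ) (hc : 0 < c) (hcC : c ≤ C)
    (hbil : ∀ z ∈ closedBall (0 : EuclideanSpace ℝ (Fin d)) r,
      ∀ z' ∈ closedBall (0 : EuclideanSpace ℝ (Fin d)) r,
        c * ‖z - z'‖ ≤ ‖φ z - φ z'‖ ∧ ‖φ z - φ z'‖ ≤ C * ‖z - z'‖)
    (hL : Function.Injective (fderiv ℝ φ 0))
    (f : EuclideanSpace ℝ (Fin d) → ℝ)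
    (hf_meas : Measurable f)
    (hf_nonneg : ∀ z, 0 ≤ f z)
    (hf_supp : ∀ z ∉ closedBall (0 : EuclideanSpace ℝ (Fin d)) r, f z = 0)
    (hf_bdd : ∃ M : ℝ, ∀ z, f z ≤ M)
    (hf_prob : ∫ z, f z = 1)
    (hf_cont : ContinuousAt f 0) (hf_pos : 0 < f 0)
    (K : EuclideanSpace ℝ (Fin D) → ℝ)
    (hK_nonneg : ∀ u, 0 ≤ K u) (hK_cont : Continuous K)
    (hK_supp : HasCompactSupport K) :
    ∀ a b : Fin D,
      Tendsto
        (fun h : ℝ =>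
          (∫ z in closedBall (0 : EuclideanSpace ℝ (Fin d)) r,
              K (h⁻¹ • (φ z - φ 0)) * ((φ z - φ 0) a * (φ z - φ 0) b) * f z) /
            h ^ (d + 2))
        (nhdsWithin 0 (Set.Ioi 0))
        (nhds (f 0 *
          ∫ u, K (fderiv ℝ φ 0 u) *
            (fderiv ℝ φ 0 u a * fderiv ℝ φ 0 u b))) := by
  intro a b
  obtain ⟨M, hM⟩ := hf_bdd
  have hM0 : 0 < M := lt_of_lt_of_le hf_pos (hM 0)
  set L := fderiv ℝ φ 0 with hLdef
  -- radius of support of K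
  obtain ⟨R₀, hR₀⟩ := hK_supp.isCompact.isBounded.subset_closedBall 0
  set R : ℝ := max R₀ 0 with hRdef
  have hR0 : 0 ≤ R := le_max_right _ _
  have hKzero : ∀ v : EuclideanSpace ℝ (Fin D), R < ‖v‖ → K v = 0 := by
    intro v hv
    apply image_eq_zero_of_notMem_tsupport
    intro hmem
    have := hR₀ hmem
    rw [mem_closedBall, dist_zero_right] at this
    exact absurd (this.trans (le_max_left _ _)) (not_le.2 hv)
  -- bound on K
  obtain ⟨Kb, hKb⟩ := hK_cont.bounded_above_of_compact_support hK_supp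
  have hKb0 : 0 ≤ Kb := le_trans (norm_nonneg (K 0)) (hKb 0)
  have hKle : ∀ v, K v ≤ Kb := fun v => (le_abs_self _).trans (by rw [← Real.norm_eq_abs]; exact hKb v)
  set ρ : ℝ := R / c with hρdef
  have hρ0 : 0 ≤ ρ := div_nonneg hR0 hc.le
  -- the rescaled integrand
  set F : ℝ → EuclideanSpace ℝ (Fin d) → ℝ := fun h u =>
    K (h⁻¹ • (φ (h • u) - φ 0)) *
      ((h⁻¹ • (φ (h • u) - φ 0)) a * (h⁻¹ • (φ (h • u) - φ 0)) b) * f (h • u)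
    with hFdef
  -- limit integrand
  set G : EuclideanSpace ℝ (Fin d) → ℝ := fun u =>
    K (L u) * (L u a * L u b) * f 0 with hGdef
  have hφdiff : HasFDerivAt φ L 0 :=
    ((hφ.differentiable one_ne_zero) 0).hasFDerivAt
  -- key pointwise convergence of difference quotients
  have hslope : ∀ u : EuclideanSpace ℝ (Fin d),
      Tendsto (fun h : ℝ => h⁻¹ • (φ (h • u) - φ 0)) (nhdsWithin 0 (Set.Ioi 0))
        (nhds (L u)) := by
    intro u
    have hline : HasDerivAt (fun t : ℝ => t • u) u 0 := by
      simpa using (hasDerivAt_id (0:ℝ)).smul_const u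
    have hcomp : HasDerivAt (fun t : ℝ => φ (t • u)) (L u) 0 := by
      have hφd' : HasFDerivAt φ L ((0:ℝ) • u) := by simpa using hφdiff
      have := hφd'.comp_hasDerivAt (x := (0:ℝ)) hline
      exact this
    have := hasDerivAt_iff_tendsto_slope.1 hcomp
    have h2 : Tendsto (slope (fun t : ℝ => φ (t • u)) 0) (nhdsWithin 0 (Set.Ioi 0))
        (nhds (L u)) :=
      this.mono_left (nhdsWithin_mono 0 (fun x hx => ne_of_gt hx))
    apply h2.congr
    intro h
    simp [slope_def_field, slope, zero_smul]
  -- pointwise convergence F h u → G u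
  have hpt : ∀ u, Tendsto (fun h => F h u) (nhdsWithin 0 (Set.Ioi 0)) (nhds (G u)) := by
    intro u
    have h1 := hslope u
    have hKt : Tendsto (fun h : ℝ => K (h⁻¹ • (φ (h • u) - φ 0)))
        (nhdsWithin 0 (Set.Ioi 0)) (nhds (K (L u))) :=
      (hK_cont.tendsto _).comp h1
    have hproj : ∀ i : Fin D, Tendsto (fun h : ℝ => (h⁻¹ • (φ (h • u) - φ 0)) i)
        (nhdsWithin 0 (Set.Ioi 0)) (nhds (L u i)) := by
      intro i
      exact ((EuclideanSpace.proj i).continuous.tendsto _).comp h1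
    have hft : Tendsto (fun h : ℝ => f (h • u)) (nhdsWithin 0 (Set.Ioi 0)) (nhds (f 0)) := by
      have hsm : Tendsto (fun h : ℝ => h • u) (nhdsWithin 0 (Set.Ioi 0))
          (nhds (0 : EuclideanSpace ℝ (Fin d))) := by
        have : Tendsto (fun h : ℝ => h • u) (nhds 0) (nhds ((0:ℝ) • u)) :=
          (continuous_id.smul continuous_const).tendsto 0
        simpa using this.mono_left nhdsWithin_le_nhds
      exact hf_cont.tendsto.comp hsm
    exact (hKt.mul ((hproj a).mul (hproj b))).mul hft
  -- support/bound facts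
  have hbound : ∀ h ∈ Set.Ioi (0:ℝ), ∀ u,
      |F h u| ≤ (closedBall (0 : EuclideanSpace ℝ (Fin d)) ρ).indicator
        (fun _ => Kb * ((C * ρ) * (C * ρ)) * M) u := by
    intro h hh u
    have hh0 : (0:ℝ) < h := hh
    set A : EuclideanSpace ℝ (Fin D) := h⁻¹ • (φ (h • u) - φ 0) with hA
    by_cases hz : h • u ∈ closedBall (0 : EuclideanSpace ℝ (Fin d)) r
    · have h0mem : (0 : EuclideanSpace ℝ (Fin d)) ∈ closedBall (0 : EuclideanSpace ℝ (Fin d)) r :=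
        mem_closedBall_self hr.le
      obtain ⟨hlow, hup⟩ := hbil _ hz _ h0mem
      have hnsm : ‖h • u - 0‖ = h * ‖u‖ := by
        rw [sub_zero, norm_smul, Real.norm_eq_abs, abs_of_pos hh0]
      rw [hnsm] at hlow hup
      have hnormA : ‖A‖ = h⁻¹ * ‖φ (h • u) - φ 0‖ := by
        rw [hA, norm_smul, Real.norm_eq_abs, abs_of_pos (inv_pos.2 hh0)]
      have hAup : ‖A‖ ≤ C * ‖u‖ := by
        rw [hnormA, inv_mul_le_iff₀ hh0]
        nlinarith [hup]
      have hAlow : c * ‖u‖ ≤ ‖A‖ := by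
        rw [hnormA, le_inv_mul_iff₀ hh0]
        nlinarith [hlow]
      have hCρ0 : 0 ≤ C * ρ := mul_nonneg ((hc.trans_le hcC).le) hρ0
      have hbnn : 0 ≤ Kb * ((C * ρ) * (C * ρ)) * M :=
        mul_nonneg (mul_nonneg hKb0 (mul_nonneg hCρ0 hCρ0)) hM0.le
      by_cases hKA : K A = 0
      · have hF0 : F h u = 0 := by
          have : F h u = K A * (A a * A b) * f (h • u) := rfl
          rw [this, hKA, zero_mul, zero_mul]
        rw [hF0, abs_zero]
        exact Set.indicator_nonneg (fun _ _ => hbnn) u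
      · -- then ‖A‖ ≤ R hence ‖u‖ ≤ ρ
        have hAR : ‖A‖ ≤ R := by
          by_contra hcon
          exact hKA (hKzero A (not_le.1 hcon))
        have huρ : ‖u‖ ≤ ρ := by
          rw [hρdef, le_div_iff₀ hc, mul_comm]
          exact hAlow.trans hAR
        have humem : u ∈ closedBall (0 : EuclideanSpace ℝ (Fin d)) ρ := by
          rw [mem_closedBall, dist_zero_right]; exact huρ
        rw [Set.indicator_of_mem humem]
        have hAρ : ‖A‖ ≤ C * ρ := by
          refine hAup.trans ?_
          exact mul_le_mul_of_nonneg_left huρ ((hc.trans_le hcC).le)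
        have habs : |F h u| = K A * (|A a| * |A b|) * f (h • u) := by
          have : F h u = K A * (A a * A b) * f (h • u) := rfl
          rw [this, abs_mul, abs_mul, abs_mul]
          rw [abs_of_nonneg (hK_nonneg A), abs_of_nonneg (hf_nonneg _)]
        rw [habs]
        have hAa : |A a| ≤ C * ρ := (abs_apply_le_norm A a).trans hAρ
        have hAb : |A b| ≤ C * ρ := (abs_apply_le_norm A b).trans hAρ
        exact mul_le_mul
          (mul_le_mul (hKle A) (mul_le_mul hAa hAb (abs_nonneg _) hCρ0)
            (mul_nonneg (abs_nonneg _) (abs_nonneg _)) hKb0)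
          (hM _) (hf_nonneg _)
          (mul_nonneg hKb0 (mul_nonneg hCρ0 hCρ0))
    · have hF0 : F h u = 0 := by
        have : F h u = K A * (A a * A b) * f (h • u) := rfl
        rw [this, hf_supp _ hz, mul_zero]
      rw [hF0, abs_zero]
      refine Set.indicator_nonneg (fun _ _ => ?_) u
      have hCρ0 : 0 ≤ C * ρ := mul_nonneg ((hc.trans_le hcC).le) hρ0
      exact mul_nonneg (mul_nonneg hKb0 (mul_nonneg hCρ0 hCρ0)) hM0.le
  -- measurability of F h
  have hFmeas : ∀ h ∈ Set.Ioi (0:ℝ), AEStronglyMeasurable (F h) volume := by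
    intro h _
    apply Measurable.aestronglyMeasurable
    have hφc : Continuous φ := hφ.continuous
    have hcont : Continuous (fun u : EuclideanSpace ℝ (Fin d) =>
        K (h⁻¹ • (φ (h • u) - φ 0)) *
          ((h⁻¹ • (φ (h • u) - φ 0)) a * (h⁻¹ • (φ (h • u) - φ 0)) b)) := by
      have hinner : Continuous (fun u : EuclideanSpace ℝ (Fin d) =>
          h⁻¹ • (φ (h • u) - φ 0)) :=
        ((hφc.comp (continuous_const_smul h)).sub continuous_const).const_smul h⁻¹
      exact (hK_cont.comp hinner).mul
        (((EuclideanSpace.proj a).continuous.comp hinner).mul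
          ((EuclideanSpace.proj b).continuous.comp hinner))
    exact hcont.measurable.mul (hf_meas.comp (measurable_const_smul h))
  -- integrability of the bound
  have hbint : Integrable ((closedBall (0 : EuclideanSpace ℝ (Fin d)) ρ).indicator
      (fun _ => Kb * ((C * ρ) * (C * ρ)) * M)) volume := by
    rw [integrable_indicator_iff measurableSet_closedBall]
    exact integrableOn_const measure_closedBall_lt_top.ne
  -- dominated convergence
  have hDCT : Tendsto (fun h => ∫ u, F h u) (nhdsWithin 0 (Set.Ioi 0))
      (nhds (∫ u, G u)) := by
    apply tendsto_integral_filter_of_dominated_convergence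
      ((closedBall (0 : EuclideanSpace ℝ (Fin d)) ρ).indicator
        (fun _ => Kb * ((C * ρ) * (C * ρ)) * M))
    · exact eventually_mem_nhdsWithin.mono hFmeas
    · exact eventually_mem_nhdsWithin.mono (fun h hh =>
        Filter.Eventually.of_forall (fun u => by
          rw [Real.norm_eq_abs]; exact hbound h hh u))
    · exact hbint
    · exact Filter.Eventually.of_forall hpt
  -- identify ∫ G with the target
  have hGint : (∫ u, G u) = f 0 * ∫ u, K (L u) * (L u a * L u b) := by
    rw [hGdef]
    rw [MeasureTheory.integral_mul_const]
    ring
  -- change of variables identity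
  have hident : ∀ h ∈ Set.Ioi (0:ℝ),
      (∫ z in closedBall (0 : EuclideanSpace ℝ (Fin d)) r,
          K (h⁻¹ • (φ z - φ 0)) * ((φ z - φ 0) a * (φ z - φ 0) b) * f z) / h ^ (d + 2)
        = ∫ u, F h u := by
    intro h hh
    have hh0 : (0:ℝ) < h := hh
    set g : EuclideanSpace ℝ (Fin d) → ℝ := fun z =>
      K (h⁻¹ • (φ z - φ 0)) * ((φ z - φ 0) a * (φ z - φ 0) b) * f z with hg
    have hstep1 : (∫ z in closedBall (0 : EuclideanSpace ℝ (Fin d)) r, g z) = ∫ z, g z := by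
      apply setIntegral_eq_integral_of_forall_compl_eq_zero
      intro z hz
      rw [hg]; simp only [hf_supp z hz, mul_zero]
    have hstep2 : (∫ u, g (h • u)) = |(h ^ d)⁻¹| * ∫ z, g z := by
      have := MeasureTheory.Measure.integral_comp_smul (volume : Measure (EuclideanSpace ℝ (Fin d))) g h
      rw [this, finrank_euclideanSpace_fin, smul_eq_mul]
    have hstep3 : ∀ u, g (h • u) = h ^ 2 * F h u := by
      intro u
      rw [hg, hFdef]
      have hcoord : ∀ i : Fin D, (φ (h • u) - φ 0) i = h * ((h⁻¹ • (φ (h • u) - φ 0)) i) := by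
        intro i
        have : (h⁻¹ • (φ (h • u) - φ 0)) i = h⁻¹ * (φ (h • u) - φ 0) i := rfl
        rw [this]
        field_simp
      simp only [hcoord a, hcoord b]
      ring
    have habs : |(h ^ d)⁻¹| = (h ^ d)⁻¹ := abs_of_pos (by positivity)
    have hint2 : (∫ u, g (h • u)) = h ^ 2 * ∫ u, F h u := by
      simp_rw [hstep3]
      rw [MeasureTheory.integral_const_mul]
    have key : (∫ z, g z) = h ^ (d + 2) * ∫ u, F h u := by
      have h1 : (∫ z, g z) = h ^ d * ∫ u, g (h • u) := by
        rw [hstep2, habs]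
        field_simp
      rw [h1, hint2]
      ring
    rw [hstep1, key]
    field_simp
  refine Tendsto.congr' (eventually_mem_nhdsWithin.mono
    (fun h hh => (hident h hh).symm)) ?_
  rw [← hGint]
  exact hDCT
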